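/- arXiv:1903.09031 — 8 statements merged into one kernel-verified Lean document; each statement's English description precedes it below -/
import Mathlib

section
/- For every complex number z with Re z > 0, Re(δ(e^{−z})) ≥ (1/2)·min{1, Re z}, where δ(ζ) = 2(1−ζ)/(1+ζ). -/
/-- The characteristic (transfer) function of the trapezoidal rule. -/
noncomputable def trDelta (ζ : ℂ) : ℂ := 2 * (1 - ζ) / (1 + ζ)

theorem re_delta_exp_neg_ge (z : ℂ) (hz : 0 < z.re) :
    (trDelta (Complex.exp (-z))).re ≥ (1 / 2) * min 1 z.re := by
  set x := z.re with hx
  set ζ := Complex.exp (-z) with hζ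
  set r := Real.exp (-x) with hrdef
  have hr : ‖ζ‖ = r := by
    rw [hζ, Complex.norm_exp]; simp [hx, hrdef]
  have hr0 : 0 < r := Real.exp_pos _
  have hr1 : r < 1 := by
    rw [hrdef]
    calc Real.exp (-x) < Real.exp 0 := Real.exp_lt_exp.mpr (by linarith)
    _ = 1 := Real.exp_zero
  set a := ζ.re with ha
  set b := ζ.im with hb
  have hab : a ^ 2 + b ^ 2 = r ^ 2 := by
    have := Complex.sq_norm ζ
    rw [hr] at this
    rw [this, Complex.normSq_apply]; ring
  have haler : a ≤ r := by rw [← hr]; exact Complex.re_le_norm ζ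
  have harge : -r ≤ a := by
    have := Complex.abs_re_le_norm ζ
    rw [hr] at this
    have := abs_le.mp this
    exact this.1
  set D := (1 + a) ^ 2 + b ^ 2 with hD
  have hDpos : 0 < D := by nlinarith
  have hre : (trDelta ζ).re = 2 * (1 - r ^ 2) / D := by
    rw [trDelta, Complex.div_re, Complex.normSq_apply]
    simp only [Complex.mul_re, Complex.mul_im, Complex.sub_re, Complex.sub_im,
      Complex.add_re, Complex.add_im, Complex.one_re, Complex.one_im,
      Complex.re_ofNat, Complex.im_ofNat]
    rw [← ha, ← hb, ← add_div,
      div_eq_div_iff (by nlinarith : ((1+a)*(1+a)+(0+b)*(0+b) : ℝ) ≠ 0) hDpos.ne']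
    rw [hD]
    linear_combination (-2*((1+a)^2+b^2)) * hab
  rw [hre]
  have hDle : D ≤ (1 + r) ^ 2 := by nlinarith
  have step1 : 2 * (1 - r ^ 2) / D ≥ 2 * (1 - r ^ 2) / (1 + r) ^ 2 := by
    apply div_le_div_of_nonneg_left (by nlinarith) hDpos
    · exact hDle
  have step2 : 2 * (1 - r ^ 2) / (1 + r) ^ 2 = 2 * (1 - r) / (1 + r) := by
    field_simp; ring
  have step3 : 2 * (1 - r) / (1 + r) ≥ 1 - r := by
    rw [ge_iff_le, le_div_iff₀ (by linarith)]
    nlinarith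
  have key : 1 - r ≥ (1 / 2) * min 1 x := by
    rcases le_or_gt 1 x with h1 | h1
    · rw [min_eq_left h1]
      have : r ≤ Real.exp (-1) := by
        rw [hrdef]; exact Real.exp_le_exp.mpr (by linarith)
      have h2 : Real.exp (-1) ≤ 1 / 2 := by
        rw [Real.exp_neg]
        rw [inv_le_comm₀ (Real.exp_pos 1) (by norm_num)]
        have := Real.add_one_le_exp 1
        linarith
      linarith
    · rw [min_eq_right h1.le]
      have hex : 1 + x ≤ Real.exp x := by linarith [Real.add_one_le_exp x]
      have : r ≤ 1 / (1 + x) := by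
        rw [hrdef, Real.exp_neg, inv_eq_one_div]
        apply div_le_div_of_nonneg_left (by norm_num) (by linarith) hex
      have h3 : 1 / (1 + x) ≤ 1 - x / 2 := by
        rw [div_le_iff₀ (by linarith)]
        nlinarith
      linarith
  calc 2 * (1 - r ^ 2) / D ≥ 2 * (1 - r ^ 2) / (1 + r) ^ 2 := step1
    _ = 2 * (1 - r) / (1 + r) := step2
    _ ≥ 1 - r := step3
    _ ≥ (1 / 2) * min 1 x := key
end

section
/- For every complex number z with Re z > 0, |δ(e^{−z})| ≤ 8/min{1, Re z}, where δ(ζ) = 2(1−ζ)/(1+ζ). -/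
lemma min_le_two_mul (r : ℝ) (hr : 0 < r) :
    min 1 r ≤ 2 * (1 - Real.exp (-r)) := by
  rcases le_total r 1 with h | h
  · rw [min_eq_right h]
    have h1 : (1:ℝ) + r ≤ Real.exp r := by
      have := Real.add_one_le_exp r; linarith
    have h2 : Real.exp (-r) * Real.exp r = 1 := by
      rw [← Real.exp_add]; simp
    have h3 : (0:ℝ) < Real.exp r := Real.exp_pos r
    have h4 : (0:ℝ) < Real.exp (-r) := Real.exp_pos _
    nlinarith [mul_le_mul_of_nonneg_left h1 h4.le]
  · rw [min_eq_left h]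
    have h1 : (2:ℝ) ≤ Real.exp 1 := by
      have := Real.add_one_le_exp 1; linarith
    have h2 : Real.exp (-r) ≤ Real.exp (-1) := by
      apply Real.exp_le_exp.2; linarith
    have h3 : Real.exp (-1) * Real.exp 1 = 1 := by
      rw [← Real.exp_add]; simp
    have h4 : (0:ℝ) < Real.exp (-1) := Real.exp_pos _
    nlinarith

theorem abs_delta_exp_neg_le (z : ℂ) (hz : 0 < z.re) :
    ‖trDelta (Complex.exp (-z))‖ ≤ 8 / min 1 z.re := by
  set w := Complex.exp (-z) with hwdef
  have habs : ‖w‖ = Real.exp (-z.re) := by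
    rw [hwdef, Complex.norm_exp]; simp
  have hlt : ‖w‖ < 1 := by
    rw [habs]; exact Real.exp_lt_one_iff.2 (by linarith)
  have hden : 1 - Real.exp (-z.re) ≤ ‖1 + w‖ := by
    have := norm_sub_norm_le (1 : ℂ) (-w)
    simp only [norm_one, norm_neg, sub_neg_eq_add] at this
    rw [← habs]; exact this
  have hdenpos : (0:ℝ) < 1 - Real.exp (-z.re) := by
    have : Real.exp (-z.re) < 1 := Real.exp_lt_one_iff.2 (by linarith)
    linarith
  have hnum : ‖2 * (1 - w)‖ ≤ 4 := by
    rw [norm_mul]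
    have : ‖1 - w‖ ≤ 2 := by
      calc ‖1 - w‖ ≤ ‖(1:ℂ)‖ + ‖w‖ :=
            norm_sub_le _ _
        _ ≤ 1 + 1 := by simp; linarith
        _ = 2 := by norm_num
    calc ‖(2:ℂ)‖ * ‖1 - w‖ ≤ 2 * 2 := by
          rw [Complex.norm_two]
          exact mul_le_mul_of_nonneg_left this (by norm_num)
      _ = 4 := by norm_num
  have hmin : (0:ℝ) < min 1 z.re := lt_min one_pos hz
  have key : min 1 z.re ≤ 2 * (1 - Real.exp (-z.re)) := min_le_two_mul z.re hz
  have habs1w : (0:ℝ) < ‖1 + w‖ := lt_of_lt_of_le hdenpos hden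
  rw [trDelta, norm_div]
  rw [div_le_div_iff₀ habs1w hmin]
  calc ‖2 * (1 - w)‖ * min 1 z.re
      ≤ 4 * (2 * (1 - Real.exp (-z.re))) := by
        apply mul_le_mul hnum key hmin.le (by norm_num)
    _ = 8 * (1 - Real.exp (-z.re)) := by ring
    _ ≤ 8 * ‖1 + w‖ := by nlinarith
end

section
/- For every complex z with Re z > 0, |δ(e^{−z})| ≤ 2·coth((Re z)/2), where δ(ζ) = 2(1−ζ)/(1+ζ). -/
/-- The real hyperbolic cotangent. -/
noncomputable def Real.coth (x : ℝ) : ℝ := Real.cosh x / Real.sinh x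

theorem abs_delta_exp_neg_le_coth (z : ℂ) (hz : 0 < z.re) :
    ‖trDelta (Complex.exp (-z))‖ ≤ 2 * Real.coth (z.re / 2) := by
  set x := z.re with hxdef
  set e : ℝ := Real.exp (-x) with hedef
  have habs : ‖Complex.exp (-z)‖ = e := by
    rw [Complex.norm_exp]; simp [hedef, hxdef]
  have hlt : e < 1 := by
    rw [hedef]; exact Real.exp_lt_one_iff.mpr (by linarith)
  have hpos : 0 < 1 - e := by linarith
  have hepos : 0 < e := Real.exp_pos _
  have h1 : ‖1 - Complex.exp (-z)‖ ≤ 1 + e := by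
    have := norm_sub_le (1 : ℂ) (Complex.exp (-z))
    simpa [habs] using this
  have h2 : 1 - e ≤ ‖1 + Complex.exp (-z)‖ := by
    have h := abs_norm_sub_norm_le (1 : ℂ) (-(Complex.exp (-z)))
    simp only [norm_one, norm_neg, habs, sub_neg_eq_add] at h
    calc 1 - e ≤ |1 - e| := le_abs_self _
      _ ≤ ‖1 + Complex.exp (-z)‖ := h
  have hcoth : Real.coth (x / 2) = (1 + e) / (1 - e) := by
    rw [Real.coth, Real.cosh_eq, Real.sinh_eq]
    have h1' : Real.exp (x/2) * Real.exp (-(x/2)) = 1 := by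
      rw [← Real.exp_add]; simp
    have h2' : Real.exp (-(x/2)) * Real.exp (-(x/2)) = e := by
      rw [← Real.exp_add, hedef]; ring_nf
    have hd : 0 < Real.exp (x/2) - Real.exp (-(x/2)) := by
      have : Real.exp (-(x/2)) < Real.exp (x/2) := Real.exp_lt_exp.mpr (by linarith)
      linarith
    rw [div_eq_div_iff (ne_of_gt (by positivity)) hpos.ne']
    linear_combination Real.exp (x/2) * h2' - Real.exp (-(x/2)) * h1'
  rw [hcoth, trDelta, norm_div, norm_mul, Complex.norm_two]
  rw [div_le_iff₀ (lt_of_lt_of_le hpos h2)]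
  have key : 2 * ((1 + e) / (1 - e)) * (1 - e) ≤
      2 * ((1 + e) / (1 - e)) * ‖1 + Complex.exp (-z)‖ := by
    apply mul_le_mul_of_nonneg_left h2
    positivity
  calc 2 * ‖1 - Complex.exp (-z)‖ ≤ 2 * (1 + e) := by linarith
    _ = 2 * ((1 + e) / (1 - e)) * (1 - e) := by field_simp
    _ ≤ _ := key
end

section
/- Let D: [0, π) → ℝ be defined by D(σ) = Σ_{ℓ≥0} α_ℓ σ^{2ℓ}, where α_ℓ = |a_ℓ|/2^{2ℓ+2} and Σ a_ℓ ω^{2ℓ} is the power series of (tanh ω − ω)/ω³ at 0. Then for every complex z with 0 < |z| < π, |δ(e^{−z}) − z| ≤ D(|z|)·|z|³, where δ(ζ) = 2(1−ζ)/(1+ζ). -/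
theorem abs_delta_sub_le_majorant
    (a : ℕ → ℂ)
    (ha : ∀ ω : ℂ, ‖ω‖ < Real.pi / 2 → ω ≠ 0 →
      (Complex.tanh ω - ω) / ω ^ 3 = ∑' ℓ : ℕ, a ℓ * ω ^ (2 * ℓ))
    (hsum : ∀ σ : ℝ, 0 ≤ σ → σ < Real.pi →
      Summable fun ℓ : ℕ => ‖a ℓ‖ / 2 ^ (2 * ℓ + 2) * σ ^ (2 * ℓ))
    (D : ℝ → ℝ)
    (hD : ∀ σ : ℝ, D σ = ∑' ℓ : ℕ, ‖a ℓ‖ / 2 ^ (2 * ℓ + 2) * σ ^ (2 * ℓ)) :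
    ∀ z : ℂ, 0 < ‖z‖ → ‖z‖ < Real.pi →
      ‖trDelta (Complex.exp (-z)) - z‖
        ≤ D (‖z‖) * ‖z‖ ^ 3 := by
  intro z hz0 hzπ
  set w : ℂ := z / 2 with hw
  have hz : z ≠ 0 := by
    intro h; simp [h] at hz0
  have hw0 : w ≠ 0 := by
    simp [hw, hz]
  have hwabs : ‖w‖ = ‖z‖ / 2 := by
    simp [hw]
  have hwlt : ‖w‖ < Real.pi / 2 := by
    rw [hwabs]; linarith
  -- cosh w ≠ 0
  have hcosh : Complex.cosh w ≠ 0 := by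
    intro h
    rw [← Complex.cos_mul_I, Complex.cos_eq_zero_iff] at h
    obtain ⟨k, hk⟩ := h
    have habs : ‖w * Complex.I‖ = ‖w‖ := by
      simp
    rw [hk] at habs
    have h1 : ‖(2 * (k : ℂ) + 1) * Real.pi / 2‖
        = |2 * (k : ℝ) + 1| * Real.pi / 2 := by
      rw [show (2 * (k : ℂ) + 1) * Real.pi / 2
            = (((2 * (k : ℝ) + 1) * Real.pi / 2 : ℝ) : ℂ) by push_cast; ring,
          Complex.norm_real, Real.norm_eq_abs, abs_div, abs_mul, abs_of_nonneg Real.pi_pos.le]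
      norm_num
    have h2 : (1 : ℝ) ≤ |2 * (k : ℝ) + 1| := by
      rcases le_or_gt 0 (k : ℝ) with h | h
      · rw [abs_of_nonneg (by linarith)]; linarith
      · have : (k : ℝ) ≤ -1 := by exact_mod_cast Int.le_of_lt_add_one (by exact_mod_cast h)
        rw [abs_of_nonpos (by linarith)]; linarith
    have : Real.pi / 2 ≤ ‖w‖ := by
      rw [← habs, h1]
      calc Real.pi / 2 = 1 * Real.pi / 2 := by ring
        _ ≤ |2 * (k : ℝ) + 1| * Real.pi / 2 := by
            apply div_le_div_of_nonneg_right _ (by norm_num)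
            exact mul_le_mul_of_nonneg_right h2 Real.pi_pos.le
    linarith
  -- trDelta (exp (-z)) = 2 * tanh w
  have hew : Complex.exp (-z) = Complex.exp (-w) * Complex.exp (-w) := by
    rw [← Complex.exp_add]; congr 1; rw [hw]; ring
  have hnum : 1 - Complex.exp (-z) = 2 * Complex.exp (-w) * Complex.sinh w := by
    simp only [hew, Complex.sinh, Complex.exp_neg]
    field_simp [Complex.exp_ne_zero]
  have hden : 1 + Complex.exp (-z) = 2 * Complex.exp (-w) * Complex.cosh w := by
    simp only [hew, Complex.cosh, Complex.exp_neg]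
    field_simp [Complex.exp_ne_zero]
  have htr : trDelta (Complex.exp (-z)) = 2 * Complex.tanh w := by
    rw [trDelta, hnum, hden, Complex.tanh_eq_sinh_div_cosh]
    rw [mul_comm (2 * Complex.exp (-w)) (Complex.sinh w),
        mul_comm (2 * Complex.exp (-w)) (Complex.cosh w)]
    rw [mul_div_assoc, mul_div_mul_right _ _ (by
      exact mul_ne_zero two_ne_zero (Complex.exp_ne_zero _))]
  -- power series identity
  have hS := ha w hwlt hw0
  have htanh : Complex.tanh w - w = w ^ 3 * ∑' ℓ : ℕ, a ℓ * w ^ (2 * ℓ) := by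
    rw [← hS, mul_div_cancel₀ _ (pow_ne_zero 3 hw0)]
  have hkey : trDelta (Complex.exp (-z)) - z
      = 2 * w ^ 3 * ∑' ℓ : ℕ, a ℓ * w ^ (2 * ℓ) := by
    rw [htr]
    have : 2 * Complex.tanh w - z = 2 * (Complex.tanh w - w) := by
      rw [hw]; ring
    rw [this, htanh]; ring
  -- abs bound
  set σ : ℝ := ‖z‖ with hσ
  have hterm : ∀ ℓ : ℕ, ‖a ℓ * w ^ (2 * ℓ)‖
      = 4 * (‖a ℓ‖ / 2 ^ (2 * ℓ + 2) * σ ^ (2 * ℓ)) := by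
    intro ℓ
    rw [norm_mul, norm_pow, hwabs, div_pow, pow_add]
    ring
  have hsum4 : Summable fun ℓ : ℕ => ‖a ℓ * w ^ (2 * ℓ)‖ := by
    simp_rw [hterm]
    exact (hsum σ (norm_nonneg z) hzπ).mul_left 4
  have hbound : ‖∑' ℓ : ℕ, a ℓ * w ^ (2 * ℓ)‖
      ≤ ∑' ℓ : ℕ, ‖a ℓ * w ^ (2 * ℓ)‖ := by
    have hsum4' : Summable fun ℓ : ℕ => ‖a ℓ * w ^ (2 * ℓ)‖ := by
      simpa using hsum4
    simpa using norm_tsum_le_tsum_norm hsum4'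
  have htsum4 : ∑' ℓ : ℕ, ‖a ℓ * w ^ (2 * ℓ)‖ = 4 * D σ := by
    rw [hD]
    rw [← tsum_mul_left]
    exact tsum_congr hterm
  rw [hkey]
  rw [norm_mul, norm_mul, norm_pow, hwabs]
  have h2 : ‖(2 : ℂ)‖ = 2 := by norm_num
  rw [h2]
  calc 2 * (σ / 2) ^ 3 * ‖∑' ℓ : ℕ, a ℓ * w ^ (2 * ℓ)‖
      ≤ 2 * (σ / 2) ^ 3 * (4 * D σ) := by
        apply mul_le_mul_of_nonneg_left _ (by positivity)
        rw [← htsum4]; exact hbound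
    _ = D σ * σ ^ 3 := by ring
end

section
/- With D as above and E_m(σ) := max{D(σ)^j : j = 1, …, m} · ((1+σ²)^m − 1)/σ², for every integer m ≥ 1 and every complex z with Re z > 0 and |z| < π, one has |δ(e^{−z})^m − z^m| ≤ E_m(|z|)·|z|^{m+2}. -/
theorem abs_delta_pow_sub_pow_le
    (a : ℕ → ℂ)
    (ha : ∀ ω : ℂ, ‖ω‖ < Real.pi / 2 → ω ≠ 0 →
      (Complex.tanh ω - ω) / ω ^ 3 = ∑' ℓ : ℕ, a ℓ * ω ^ (2 * ℓ))
    (hsum : ∀ σ : ℝ, 0 ≤ σ → σ < Real.pi →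
      Summable fun ℓ : ℕ => ‖a ℓ‖ / 2 ^ (2 * ℓ + 2) * σ ^ (2 * ℓ))
    (D : ℝ → ℝ)
    (hD : ∀ σ : ℝ, D σ = ∑' ℓ : ℕ, ‖a ℓ‖ / 2 ^ (2 * ℓ + 2) * σ ^ (2 * ℓ))
    (m : ℕ) (hm : 1 ≤ m)
    (E : ℝ → ℝ)
    (hE : ∀ σ : ℝ, E σ =
      (sSup {x : ℝ | ∃ j : ℕ, 1 ≤ j ∧ j ≤ m ∧ x = D σ ^ j}) *
        (((1 + σ ^ 2) ^ m - 1) / σ ^ 2)) :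
    ∀ z : ℂ, 0 < z.re → ‖z‖ < Real.pi →
      ‖trDelta (Complex.exp (-z)) ^ m - z ^ m‖
        ≤ E (‖z‖) * ‖z‖ ^ (m + 2) := by
  intro z hre hzpi
  have hz0 : z ≠ 0 := fun h => by simp [h] at hre
  set σ := ‖z‖ with hσdef
  have hσpos : 0 < σ := norm_pos_iff.mpr hz0
  -- the denominator 1 + exp(-z) is nonzero
  have habsexp : ‖Complex.exp (-z)‖ < 1 := by
    rw [Complex.norm_exp]
    simp only [Complex.neg_re]
    exact Real.exp_lt_one_iff.mpr (by linarith)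
  have hden : (1 : ℂ) + Complex.exp (-z) ≠ 0 := by
    intro h
    have h1 : Complex.exp (-z) = -1 := by linear_combination h
    rw [h1] at habsexp; simp at habsexp
  -- trDelta (exp (-z)) = 2 * tanh (z/2)
  have hhalf : Complex.exp (-(z / 2)) = Complex.exp (z / 2) * Complex.exp (-z) := by
    rw [← Complex.exp_add]; ring_nf
  have hcosh : Complex.cosh (z / 2) = Complex.exp (z / 2) * (1 + Complex.exp (-z)) / 2 := by
    rw [Complex.cosh, hhalf]; ring
  have hsinh : Complex.sinh (z / 2) = Complex.exp (z / 2) * (1 - Complex.exp (-z)) / 2 := by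
    rw [Complex.sinh, hhalf]; ring
  have hexp0 : Complex.exp (z / 2) ≠ 0 := Complex.exp_ne_zero _
  have hcosh0 : Complex.cosh (z / 2) ≠ 0 := by
    rw [hcosh]
    exact div_ne_zero (mul_ne_zero hexp0 hden) two_ne_zero
  have hw : trDelta (Complex.exp (-z)) = 2 * Complex.tanh (z / 2) := by
    rw [Complex.tanh_eq_sinh_div_cosh, hsinh, hcosh, trDelta]
    field_simp
  -- series expansion for the error q
  have hzhalf_ne : z / 2 ≠ 0 := div_ne_zero hz0 two_ne_zero
  have hzhalf_lt : ‖z / 2‖ < Real.pi / 2 := by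
    rw [norm_div]
    rw [Complex.norm_two]
    rw [← hσdef]
    linarith
  have hT := ha (z / 2) hzhalf_lt hzhalf_ne
  have htanh : Complex.tanh (z / 2) - z / 2
      = (∑' ℓ : ℕ, a ℓ * (z / 2) ^ (2 * ℓ)) * (z / 2) ^ 3 :=
    (div_eq_iff (pow_ne_zero 3 hzhalf_ne)).mp hT
  set q := trDelta (Complex.exp (-z)) - z with hqdef
  have hq : q = (∑' ℓ : ℕ, a ℓ * (z / 2) ^ (2 * ℓ)) * z ^ 3 / 4 := by
    rw [hqdef, hw]
    linear_combination 2 * htanh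
  -- summability and bound for the series
  have hsumσ := hsum σ hσpos.le hzpi
  have hptwise : ∀ ℓ : ℕ, ‖a ℓ * (z / 2) ^ (2 * ℓ)‖
      = 4 * (‖a ℓ‖ / 2 ^ (2 * ℓ + 2) * σ ^ (2 * ℓ)) := by
    intro ℓ
    rw [norm_mul, norm_pow, norm_div]
    simp only [Complex.norm_two, ← hσdef]
    rw [div_pow, pow_add]
    field_simp
    ring
  have hsumnorm : Summable fun ℓ : ℕ => ‖a ℓ * (z / 2) ^ (2 * ℓ)‖ :=
    (hsumσ.mul_left 4).congr fun ℓ => (hptwise ℓ).symm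
  have hTabs : ‖∑' ℓ : ℕ, a ℓ * (z / 2) ^ (2 * ℓ)‖ ≤ 4 * D σ := by
    calc ‖∑' ℓ : ℕ, a ℓ * (z / 2) ^ (2 * ℓ)‖
        ≤ ∑' ℓ : ℕ, ‖a ℓ * (z / 2) ^ (2 * ℓ)‖ := by
          have hsumnorm' : Summable fun ℓ : ℕ => ‖a ℓ * (z / 2) ^ (2 * ℓ)‖ := by
            exact hsumnorm
          have h := norm_tsum_le_tsum_norm hsumnorm'
          exact h
      _ = 4 * D σ := by
          rw [hD σ, ← tsum_mul_left]
          exact tsum_congr hptwise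
  have hDnn : 0 ≤ D σ := by
    rw [hD σ]
    exact tsum_nonneg fun ℓ => by positivity
  have hqb : ‖q‖ ≤ D σ * σ ^ 3 := by
    rw [hq, norm_div, norm_mul, norm_pow]
    have h4 : ‖(4 : ℂ)‖ = 4 := by norm_num [Complex.norm_ofNat]
    rw [h4, ← hσdef]
    rw [div_le_iff₀ (by norm_num : (0:ℝ) < 4)]
    calc ‖∑' ℓ : ℕ, a ℓ * (z / 2) ^ (2 * ℓ)‖ * σ ^ 3
        ≤ (4 * D σ) * σ ^ 3 := by gcongr
      _ = D σ * σ ^ 3 * 4 := by ring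
  -- the supremum M
  set S : Set ℝ := {x : ℝ | ∃ j : ℕ, 1 ≤ j ∧ j ≤ m ∧ x = D σ ^ j} with hSdef
  have hSfin : S.Finite := by
    apply Set.Finite.subset ((Set.finite_Icc 1 m).image fun j => D σ ^ j)
    rintro x ⟨j, h1, h2, rfl⟩
    exact ⟨j, ⟨h1, h2⟩, rfl⟩
  have hMle : ∀ j : ℕ, 1 ≤ j → j ≤ m → D σ ^ j ≤ sSup S := fun j h1 h2 =>
    le_csSup hSfin.bddAbove ⟨j, h1, h2, rfl⟩
  -- binomial expansion
  have hwz : trDelta (Complex.exp (-z)) = z + q := by rw [hqdef]; ring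
  have hbin : trDelta (Complex.exp (-z)) ^ m - z ^ m
      = ∑ k ∈ Finset.range m, z ^ k * q ^ (m - k) * (m.choose k : ℂ) := by
    rw [hwz, add_pow, Finset.sum_range_succ]
    simp [Nat.choose_self]
  -- termwise bound
  have hterm : ∀ k ∈ Finset.range m,
      ‖z ^ k * q ^ (m - k) * (m.choose k : ℂ)‖
        ≤ sSup S * σ ^ m * ((σ ^ 2) ^ (m - k) * (m.choose k : ℝ)) := by
    intro k hk
    have hkm : k < m := Finset.mem_range.mp hk
    rw [norm_mul, norm_mul, norm_pow, norm_pow, Complex.norm_natCast, ← hσdef]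
    have h1 : ‖q‖ ^ (m - k) ≤ (D σ * σ ^ 3) ^ (m - k) :=
      pow_le_pow_left₀ (norm_nonneg q) hqb _
    have h2 : (D σ * σ ^ 3) ^ (m - k) = D σ ^ (m - k) * σ ^ (3 * (m - k)) := by
      rw [mul_pow, ← pow_mul]
    have h3 : D σ ^ (m - k) ≤ sSup S := hMle (m - k) (by omega) (by omega)
    have h4 : σ ^ k * σ ^ (3 * (m - k)) = σ ^ m * σ ^ (2 * (m - k)) := by
      rw [← pow_add, ← pow_add]
      congr 1
      omega
    calc σ ^ k * ‖q‖ ^ (m - k) * (m.choose k : ℝ)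
        ≤ σ ^ k * (sSup S * σ ^ (3 * (m - k))) * (m.choose k : ℝ) := by
          gcongr
          calc ‖q‖ ^ (m - k) ≤ D σ ^ (m - k) * σ ^ (3 * (m - k)) := h2 ▸ h1
            _ ≤ sSup S * σ ^ (3 * (m - k)) := by gcongr
      _ = sSup S * σ ^ m * ((σ ^ 2) ^ (m - k) * (m.choose k : ℝ)) := by
          rw [← pow_mul]
          linear_combination (sSup S * (m.choose k : ℝ)) * h4
  -- binomial identity for the sum
  have hsum2 : ∑ k ∈ Finset.range m, (σ ^ 2) ^ (m - k) * (m.choose k : ℝ)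
      = (1 + σ ^ 2) ^ m - 1 := by
    have h := add_pow (1 : ℝ) (σ ^ 2) m
    rw [Finset.sum_range_succ] at h
    simp only [one_pow, one_mul, Nat.choose_self, Nat.cast_one, Nat.sub_self, pow_zero,
      mul_one] at h
    linarith
  -- finish
  calc ‖trDelta (Complex.exp (-z)) ^ m - z ^ m‖
      = ‖∑ k ∈ Finset.range m, z ^ k * q ^ (m - k) * (m.choose k : ℂ)‖ := by
        rw [hbin]
    _ ≤ ∑ k ∈ Finset.range m, ‖z ^ k * q ^ (m - k) * (m.choose k : ℂ)‖ :=
        norm_sum_le _ _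
    _ ≤ ∑ k ∈ Finset.range m, sSup S * σ ^ m * ((σ ^ 2) ^ (m - k) * (m.choose k : ℝ)) :=
        Finset.sum_le_sum hterm
    _ = sSup S * σ ^ m * ((1 + σ ^ 2) ^ m - 1) := by
        rw [← Finset.mul_sum, hsum2]
    _ = E σ * σ ^ (m + 2) := by
        rw [hE σ]
        field_simp
        ring
end

section
/- With D as above, for every complex z with Re z > 0 and 0 < |z| < π, Re(δ(e^{−z})/z) ≥ 1 − |z|²·D(|z|). -/
lemma trDelta_exp_neg_eq_tanh (z : ℂ) (hden : 1 + Complex.exp (-z) ≠ 0) :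
    trDelta (Complex.exp (-z)) = 2 * Complex.tanh (z / 2) := by
  rw [Complex.tanh_eq_sinh_div_cosh]
  unfold trDelta Complex.sinh Complex.cosh
  have hE : Complex.exp (-z) = Complex.exp (-(z/2)) * Complex.exp (-(z/2)) := by
    rw [← Complex.exp_add]; ring_nf
  have huv : Complex.exp (z/2) * Complex.exp (-(z/2)) = 1 := by
    rw [← Complex.exp_add]; simp
  have hc : Complex.exp (z/2) + Complex.exp (-(z/2)) ≠ 0 := by
    have : Complex.exp (z/2) + Complex.exp (-(z/2))
        = Complex.exp (z/2) * (1 + Complex.exp (-z)) := by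
      rw [mul_add, mul_one, hE, ← mul_assoc, huv, one_mul]
    rw [this]
    exact mul_ne_zero (Complex.exp_ne_zero _) hden
  rw [hE] at hden ⊢
  generalize hu : Complex.exp (z / 2) = u at huv hc ⊢
  generalize hv : Complex.exp (-(z / 2)) = v at huv hc hden ⊢
  have hden2 : 1 + v ^ 2 ≠ 0 := by rwa [sq]
  field_simp
  ring_nf
  linear_combination (-2 * v) * huv

set_option maxHeartbeats 1000000 in
theorem re_delta_div_ge
    (a : ℕ → ℂ)
    (ha : ∀ ω : ℂ, ‖ω‖ < Real.pi / 2 → ω ≠ 0 →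
      (Complex.tanh ω - ω) / ω ^ 3 = ∑' ℓ : ℕ, a ℓ * ω ^ (2 * ℓ))
    (hsum : ∀ σ : ℝ, 0 ≤ σ → σ < Real.pi →
      Summable fun ℓ : ℕ => ‖a ℓ‖ / 2 ^ (2 * ℓ + 2) * σ ^ (2 * ℓ))
    (D : ℝ → ℝ)
    (hD : ∀ σ : ℝ, D σ = ∑' ℓ : ℕ, ‖a ℓ‖ / 2 ^ (2 * ℓ + 2) * σ ^ (2 * ℓ)) :
    ∀ z : ℂ, 0 < z.re → 0 < ‖z‖ → ‖z‖ < Real.pi →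
      (trDelta (Complex.exp (-z)) / z).re
        ≥ 1 - ‖z‖ ^ 2 * D (‖z‖) := by
  intro z hre habs0 habsπ
  have hz0 : z ≠ 0 := by
    intro h; rw [h] at habs0; simp at habs0
  have hω0 : z / 2 ≠ 0 := by simp [hz0]
  have hωabs : ‖z / 2‖ = ‖z‖ / 2 := by
    rw [norm_div]; simp
  have hωlt : ‖z / 2‖ < Real.pi / 2 := by
    rw [hωabs]; linarith
  -- denominator nonzero
  have hden : (1 : ℂ) + Complex.exp (-z) ≠ 0 := by
    intro h
    have he : Complex.exp (-z) = -1 := by linear_combination h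
    have h1 : ‖Complex.exp (-z)‖ = 1 := by rw [he]; simp
    rw [Complex.norm_exp] at h1
    simp only [Complex.neg_re] at h1
    have h2 : (-z.re) = 0 := Real.exp_eq_one_iff (-z.re) |>.mp h1
    linarith
  have hkey := trDelta_exp_neg_eq_tanh z hden
  -- series
  have hS := ha (z / 2) hωlt hω0
  set S : ℂ := ∑' ℓ : ℕ, a ℓ * (z / 2) ^ (2 * ℓ) with hSdef
  have hω3 : (z / 2) ^ 3 ≠ 0 := pow_ne_zero _ hω0
  have htanh : Complex.tanh (z / 2) = z / 2 + (z / 2) ^ 3 * S := by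
    have h := (div_eq_iff hω3).mp hS
    linear_combination h
  have hdivz : trDelta (Complex.exp (-z)) / z = 1 + (z / 2) ^ 2 * S := by
    rw [hkey, htanh]
    field_simp
  -- summability of norms
  have hσ0 : (0:ℝ) ≤ ‖z‖ := le_of_lt habs0
  have hg := hsum (‖z‖) hσ0 habsπ
  have hnorm_eq : (fun ℓ : ℕ => ‖a ℓ * (z / 2) ^ (2 * ℓ)‖)
      = fun ℓ : ℕ => 4 * (‖a ℓ‖ / 2 ^ (2 * ℓ + 2) * ‖z‖ ^ (2 * ℓ)) := by
    funext ℓ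
    rw [norm_mul, norm_pow, hωabs, div_pow]
    have h4 : (2:ℝ) ^ (2 * ℓ + 2) = 2 ^ (2 * ℓ) * 4 := by rw [pow_add]; norm_num
    have h2 : (2:ℝ) ^ (2 * ℓ) ≠ 0 := by positivity
    rw [h4]
    field_simp
  have hsumm : Summable fun ℓ : ℕ => ‖a ℓ * (z / 2) ^ (2 * ℓ)‖ := by
    rw [hnorm_eq]
    exact hg.mul_left 4
  have htsum : (∑' ℓ : ℕ, ‖a ℓ * (z / 2) ^ (2 * ℓ)‖) = 4 * D (‖z‖) := by
    rw [hnorm_eq, tsum_mul_left, hD]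
  have hSle : ‖S‖ ≤ 4 * D (‖z‖) := by
    rw [hSdef, ← htsum]
    have h := norm_tsum_le_tsum_norm (f := fun ℓ : ℕ => a ℓ * (z / 2) ^ (2 * ℓ))
      (by exact hsumm)
    exact h
  -- finish
  rw [hdivz]
  have hre2 : (1 + (z / 2) ^ 2 * S).re = 1 + ((z / 2) ^ 2 * S).re := by simp
  rw [hre2]
  have h1 : -(‖(z / 2) ^ 2 * S‖) ≤ ((z / 2) ^ 2 * S).re :=
    (abs_le.mp (Complex.abs_re_le_norm _)).1
  have h2 : ‖(z / 2) ^ 2 * S‖ ≤ ‖z‖ ^ 2 * D (‖z‖) := by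
    rw [norm_mul, norm_pow, hωabs]
    calc (‖z‖ / 2) ^ 2 * ‖S‖
        ≤ (‖z‖ / 2) ^ 2 * (4 * D (‖z‖)) := by
          apply mul_le_mul_of_nonneg_left hSle (by positivity)
      _ = ‖z‖ ^ 2 * D (‖z‖) := by ring
  linarith
end

section
/- Let 0 < κ ≤ 1 and for s ∈ ℂ with Re s > 0 set s_κ := (1/κ)·δ(e^{−κs}) = (2/κ)·tanh(κs/2). Then Re s_κ ≥ (1/2)·min{1, Re s} and |s_κ| ≤ 8/(κ²·min{1, Re s}). -/
set_option maxHeartbeats 1000000 in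
theorem s_kappa_bounds (κ : ℝ) (hκ0 : 0 < κ) (hκ1 : κ ≤ 1)
    (s : ℂ) (hs : 0 < s.re) :
    ((1 / κ : ℂ) * trDelta (Complex.exp (-(κ * s)))).re ≥ (1 / 2) * min 1 s.re ∧
    ‖(1 / κ : ℂ) * trDelta (Complex.exp (-(κ * s)))‖
      ≤ 8 / (κ ^ 2 * min 1 s.re) := by
  set w : ℂ := Complex.exp (-(κ * s)) with hw
  set m : ℝ := min 1 s.re with hm
  have hm0 : 0 < m := lt_min one_pos hs
  have hm1 : m ≤ 1 := min_le_left _ _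
  have hms : m ≤ s.re := min_le_right _ _
  set x : ℝ := κ * s.re with hxdef
  have hx0 : 0 < x := mul_pos hκ0 hs
  set a : ℝ := Real.exp (-x) with hadef
  have ha0 : 0 < a := Real.exp_pos _
  have ha1 : a < 1 := Real.exp_lt_one_iff.mpr (by linarith)
  have hr : ‖w‖ = a := by
    rw [hw, Complex.norm_exp]
    congr 1
    simp [Complex.mul_re, hxdef]
  -- the key real inequality
  set y : ℝ := κ * m with hydef
  have hy0 : 0 < y := mul_pos hκ0 hm0
  have hy1 : y ≤ 1 := by
    calc y ≤ 1 * 1 := mul_le_mul hκ1 hm1 hm0.le zero_le_one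
    _ = 1 := by ring
  have hyx : y ≤ x := mul_le_mul_of_nonneg_left hms hκ0.le
  have hkey : y * (1 + a) ≤ 4 * (1 - a) := by
    set b : ℝ := Real.exp (-y) with hb
    have hab : a ≤ b := Real.exp_le_exp.mpr (by linarith)
    have hb0 : 0 < b := Real.exp_pos _
    have hb1 : b * (1 + y) ≤ 1 := by
      have h1 : 1 + y ≤ Real.exp y := by
        have := Real.add_one_le_exp y; linarith
      have h2 : b * (1 + y) ≤ b * Real.exp y :=
        mul_le_mul_of_nonneg_left h1 hb0.le
      have h3 : b * Real.exp y = 1 := by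
        rw [hb, ← Real.exp_add]; simp
      linarith
    nlinarith [mul_nonneg (sub_nonneg.2 hab) (by positivity : (0:ℝ) ≤ (4+y)*(1+y)),
      mul_nonneg (sub_nonneg.2 hb1) (by linarith : (0:ℝ) ≤ 4+y), sq_nonneg y]
  -- complex computations
  have hnsq : w.re * w.re + w.im * w.im = a * a := by
    have := Complex.sq_norm w
    rw [hr, Complex.normSq_apply] at this
    nlinarith [this]
  have hwre : w.re ≤ a := by
    calc w.re ≤ |w.re| := le_abs_self _
    _ ≤ ‖w‖ := Complex.abs_re_le_norm w
    _ = a := hr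
  set N : ℝ := Complex.normSq (1 + w) with hN
  have h1w : (1 : ℂ) + w ≠ 0 := by
    intro h
    have : w = -1 := by linear_combination h
    rw [this] at hr
    simp at hr
    linarith
  have hN0 : 0 < N := Complex.normSq_pos.mpr h1w
  have hNle : N ≤ (1 + a) ^ 2 := by
    rw [hN, Complex.normSq_apply]
    simp only [Complex.add_re, Complex.add_im, Complex.one_re, Complex.one_im]
    nlinarith [hnsq, hwre]
  have habs1w : 1 - a ≤ ‖1 + w‖ := by
    have h := norm_add_le (1 + w) (-w)
    simp only [add_neg_cancel_right, norm_neg, hr] at h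
    simp at h
    linarith
  have habs1mw : ‖1 - w‖ ≤ 1 + a := by
    have h := norm_sub_le (1 : ℂ) w
    rw [hr] at h
    simpa using h
  have hoκ : (1 / κ : ℂ) = ((1/κ : ℝ) : ℂ) := by push_cast; ring
  clear_value w m x a y N
  have hre : (trDelta w).re = 2 * (1 - a ^ 2) / N := by
    rw [trDelta, Complex.div_re, ← hN]
    rw [← add_div]
    congr 1
    simp only [Complex.mul_re, Complex.mul_im, Complex.sub_re, Complex.sub_im,
      Complex.one_re, Complex.one_im, Complex.add_re, Complex.add_im,
      Complex.re_ofNat, Complex.im_ofNat]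
    nlinarith [hnsq]
  constructor
  · -- real part bound
    rw [hoκ, Complex.re_ofReal_mul, hre]
    have h1 : y / 2 ≤ 2 * (1 - a ^ 2) / N := by
      rw [le_div_iff₀ hN0]
      have e1 : y / 2 * N ≤ y / 2 * (1 + a) ^ 2 :=
        mul_le_mul_of_nonneg_left hNle (by positivity)
      have e2 : y / 2 * (1 + a) ^ 2 ≤ 2 * (1 - a ^ 2) := by
        nlinarith [mul_nonneg (sub_nonneg.2 hkey) (by linarith : (0:ℝ) ≤ 1 + a)]
      linarith
    have h2 : (1/κ) * (y/2) ≤ (1/κ) * (2 * (1 - a ^ 2) / N) :=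
      mul_le_mul_of_nonneg_left h1 (by positivity)
    have h3 : (1/κ) * (y/2) = (1/2) * m := by
      rw [hydef]; field_simp
    linarith [h2]
  · -- abs bound
    rw [norm_mul, hoκ, Complex.norm_real, Real.norm_eq_abs, abs_of_pos (by positivity : (0:ℝ) < 1/κ)]
    have habsδ : ‖trDelta w‖ ≤ 8 / y := by
      rw [trDelta, norm_div, norm_mul]
      simp only [Complex.norm_two]
      rw [div_le_div_iff₀ (norm_pos_iff.mpr h1w) hy0]
      have h1 : 2 * ‖1 - w‖ * y ≤ 2 * (1 + a) * y := by
        apply mul_le_mul_of_nonneg_right _ hy0.le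
        linarith
      have h2 : 2 * (1 + a) * y ≤ 8 * (1 - a) := by nlinarith [hkey]
      have h3 : 8 * (1 - a) ≤ 8 * ‖1 + w‖ := by linarith
      linarith
    calc (1/κ) * ‖trDelta w‖ ≤ (1/κ) * (8 / y) :=
          mul_le_mul_of_nonneg_left habsδ (by positivity)
    _ = 8 / (κ ^ 2 * m) := by rw [hydef]; field_simp
end

section
/- Let X, Y be Banach spaces and F : {Re s > 0} → B(X,Y) be analytic with ‖F(s)‖ ≤ C_F(Re s)·|s|^μ for all Re s > 0, where μ ≤ 0 and C_F is non-increasing on (0,∞). Then for all s with Re s > 0, ‖F'(s)‖ ≤ (2^{1−μ}/Re s)·C_F((Re s)/2)·|s|^μ. -/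
theorem deriv_bound_of_transfer_bound
    {X Y : Type*} [NormedAddCommGroup X] [NormedSpace ℂ X]
    [NormedAddCommGroup Y] [NormedSpace ℂ Y]
    (F : ℂ → X →L[ℂ] Y)
    (hF : DifferentiableOn ℂ F {s : ℂ | 0 < s.re})
    (μ : ℝ) (hμ : μ ≤ 0)
    (CF : ℝ → ℝ) (hCF : AntitoneOn CF (Set.Ioi (0 : ℝ)))
    (hbound : ∀ s : ℂ, 0 < s.re → ‖F s‖ ≤ CF s.re * ‖s‖ ^ μ) :
    ∀ s : ℂ, 0 < s.re →
      ‖deriv F s‖ ≤ (2 ^ (1 - μ) / s.re) * CF (s.re / 2) * ‖s‖ ^ μ := by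
  intro s hs
  set R : ℝ := s.re / 2 with hR
  have hRpos : 0 < R := by positivity
  have habs : 0 < ‖s‖ := by
    rw [norm_pos_iff]
    intro h; rw [h] at hs; simp at hs
  have hreabs : s.re ≤ ‖s‖ := Complex.re_le_norm s
  -- closed ball lies in the half plane
  have hsub : Metric.closedBall s R ⊆ {z : ℂ | 0 < z.re} := by
    intro z hz
    have hdist : ‖z - s‖ ≤ R := by
      simpa [Complex.dist_eq] using Metric.mem_closedBall.mp hz
    have : |(z - s).re| ≤ R := (Complex.abs_re_le_norm _).trans hdist
    have h1 : s.re - R ≤ z.re := by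
      have := neg_le_of_abs_le this
      simp only [Complex.sub_re] at this
      linarith
    simp only [Set.mem_setOf_eq]
    have : s.re - R = R := by rw [hR]; ring
    linarith
  -- key facts on the closed ball
  have key : ∀ z ∈ Metric.sphere s R,
      ‖F z‖ ≤ CF R * (‖s‖ / 2) ^ μ := by
    intro z hz
    have hdist : ‖z - s‖ = R := by
      simpa [Complex.dist_eq] using (Metric.mem_sphere.mp hz)
    have hzmem : z ∈ Metric.closedBall s R :=
      Metric.sphere_subset_closedBall hz
    have hzre : R ≤ z.re := by
      have : |(z - s).re| ≤ R := (Complex.abs_re_le_norm _).trans hdist.le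
      have := neg_le_of_abs_le this
      simp only [Complex.sub_re] at this
      have hsr : s.re - R = R := by rw [hR]; ring
      linarith
    have hzre0 : 0 < z.re := lt_of_lt_of_le hRpos hzre
    have hzabs : ‖s‖ / 2 ≤ ‖z‖ := by
      have : ‖s‖ - ‖z‖ ≤ ‖s - z‖ :=
        by simpa using norm_sub_norm_le s z
      have h2 : ‖s - z‖ = R := by rw [← hdist, norm_sub_rev]
      have hR2 : R ≤ ‖s‖ / 2 := by
        rw [hR]; linarith
      linarith
    calc ‖F z‖ ≤ CF z.re * ‖z‖ ^ μ := hbound z hzre0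
      _ ≤ CF R * (‖s‖ / 2) ^ μ := by
          have h1 : CF z.re ≤ CF R :=
            hCF (Set.mem_Ioi.mpr hRpos) (Set.mem_Ioi.mpr hzre0) hzre
          have h2 : ‖z‖ ^ μ ≤ (‖s‖ / 2) ^ μ :=
            Real.rpow_le_rpow_of_nonpos (by positivity) hzabs hμ
          have hCFz : 0 ≤ CF z.re := by
            have hb := hbound z hzre0
            have hp : (0:ℝ) < ‖z‖ ^ μ := by
              apply Real.rpow_pos_of_pos
              exact lt_of_lt_of_le (by positivity) hzabs
            nlinarith [norm_nonneg (F z)]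
          have hCFR : 0 ≤ CF R := le_trans hCFz h1
          have hzp : 0 ≤ ‖z‖ ^ μ := Real.rpow_nonneg (by positivity) μ
          exact mul_le_mul h1 h2 hzp hCFR
  have hdc : DiffContOnCl ℂ F (Metric.ball s R) := by
    apply DifferentiableOn.diffContOnCl
    rw [closure_ball s hRpos.ne']
    exact hF.mono hsub
  have hmain := Complex.norm_deriv_le_of_forall_mem_sphere_norm_le hRpos hdc key
  refine hmain.trans_eq ?_
  rw [Real.div_rpow habs.le (by norm_num : (0:ℝ) ≤ 2)]
  rw [Real.rpow_sub (by norm_num : (0:ℝ) < 2), Real.rpow_one]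
  field_simp
  ring
end
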